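/- Let φ(z) be holomorphic near 0 with values in n×n matrices, with φ(0) ≠ 0 as a matrix but det φ(0) = 0, and set V = ker φ(0). Then ψ(z) := φ(z) ∘ T_V(z)⁻¹ (defined for z ≠ 0) extends holomorphically across 0, ψ(0) is injective on V^⊥, and ord₀(det ψ) = ord₀(det φ) − dim V. -/

import Mathlib

open scoped Topology

noncomputable def projc {n : ℕ} (V : Submodule ℂ (EuclideanSpace ℂ (Fin n))) :
    EuclideanSpace ℂ (Fin n) →L[ℂ] EuclideanSpace ℂ (Fin n) :=
  V.subtypeL.comp V.orthogonalProjectionOnto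

noncomputable def Tc {n : ℕ} (V : Submodule ℂ (EuclideanSpace ℂ (Fin n))) (z : ℂ) :
    EuclideanSpace ℂ (Fin n) →L[ℂ] EuclideanSpace ℂ (Fin n) :=
  z • projc V + (1 - projc V)

section Aux

variable {n : ℕ}

local notation "Ec" => EuclideanSpace ℂ (Fin n)

lemma projc_apply (V : Submodule ℂ Ec) (x : Ec) :
    projc V x = (V.orthogonalProjectionOnto x : Ec) := rfl

lemma projc_mem (V : Submodule ℂ Ec) (x : Ec) : projc V x ∈ V :=
  (V.orthogonalProjectionOnto x).2

lemma projc_of_mem (V : Submodule ℂ Ec) {x : Ec} (hx : x ∈ V) : projc V x = x := by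
  rw [projc_apply]
  exact V.starProjection_eq_self_iff.mpr hx

lemma projc_of_mem_orth (V : Submodule ℂ Ec) {x : Ec} (hx : x ∈ Vᗮ) : projc V x = 0 := by
  rw [projc_apply, Submodule.orthogonalProjectionOnto_apply_of_mem_orthogonal hx]
  rfl

lemma projc_idem (V : Submodule ℂ Ec) (x : Ec) : projc V (projc V x) = projc V x :=
  projc_of_mem V (projc_mem V x)

/-- Analyticity of the determinant of an analytic family of operators. -/
lemma analyticAt_det' {A : ℂ → (Ec →L[ℂ] Ec)} (hA : AnalyticAt ℂ A 0) :
    AnalyticAt ℂ (fun z => LinearMap.det ((A z : Ec →L[ℂ] Ec) : Ec →ₗ[ℂ] Ec)) 0 := by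
  classical
  set b := Module.finBasis ℂ Ec with hb
  have hM : ∀ i j, AnalyticAt ℂ
      (fun z => LinearMap.toMatrix b b ((A z : Ec →L[ℂ] Ec) : Ec →ₗ[ℂ] Ec) i j) 0 := by
    intro i j
    let ℓ : (Ec →L[ℂ] Ec) →ₗ[ℂ] ℂ :=
      { toFun := fun T => LinearMap.toMatrix b b (T : Ec →ₗ[ℂ] Ec) i j
        map_add' := by intro x y; simp [Matrix.add_apply]
        map_smul' := by intro c x; simp [Matrix.smul_apply] }
    have hℓ : AnalyticAt ℂ (LinearMap.toContinuousLinearMap ℓ) (A 0) :=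
      (LinearMap.toContinuousLinearMap ℓ).analyticAt (A 0)
    exact hℓ.comp hA
  have hdet : (fun z => LinearMap.det ((A z : Ec →L[ℂ] Ec) : Ec →ₗ[ℂ] Ec))
      = fun z => ∑ σ : Equiv.Perm (Fin (Module.finrank ℂ Ec)),
          (Equiv.Perm.sign σ : ℂ) *
            ∏ i, LinearMap.toMatrix b b ((A z : Ec →L[ℂ] Ec) : Ec →ₗ[ℂ] Ec) (σ i) i := by
    funext z
    rw [← LinearMap.det_toMatrix b, Matrix.det_apply']
  rw [hdet]
  exact Finset.analyticAt_fun_sum _ fun σ _ =>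
    analyticAt_const.mul (Finset.analyticAt_fun_prod _ fun i _ => hM (σ i) i)

lemma det_Tc (V : Submodule ℂ Ec) (z : ℂ) :
    LinearMap.det ((Tc V z : Ec →L[ℂ] Ec) : Ec →ₗ[ℂ] Ec) = z ^ Module.finrank ℂ V := by
  classical
  have hc : IsCompl V Vᗮ := Submodule.isCompl_orthogonal_of_hasOrthogonalProjection
  set bV := Module.finBasis ℂ V
  set bW := Module.finBasis ℂ ↥Vᗮ
  set e := Submodule.prodEquivOfIsCompl V Vᗮ hc
  set b : Module.Basis _ ℂ Ec := (bV.prod bW).map e with hbdef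
  have hTv : ∀ v : V, Tc V z (v : Ec) = z • (v : Ec) := by
    intro v
    simp only [Tc, ContinuousLinearMap.add_apply, ContinuousLinearMap.smul_apply,
      ContinuousLinearMap.sub_apply, ContinuousLinearMap.one_apply,
      projc_of_mem V v.2]
    abel
  have hTw : ∀ w : ↥Vᗮ, Tc V z (w : Ec) = (w : Ec) := by
    intro w
    simp only [Tc, ContinuousLinearMap.add_apply, ContinuousLinearMap.smul_apply,
      ContinuousLinearMap.sub_apply, ContinuousLinearMap.one_apply,
      projc_of_mem_orth V w.2, smul_zero, sub_zero, zero_add]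
  have hbinl : ∀ i, b (Sum.inl i) = (bV i : Ec) := by
    intro i
    simp [hbdef, Module.Basis.map_apply, Module.Basis.prod_apply, e]
  have hbinr : ∀ i, b (Sum.inr i) = ((bW i : Ec)) := by
    intro i
    simp [hbdef, Module.Basis.map_apply, Module.Basis.prod_apply, e]
  have hmat : LinearMap.toMatrix b b ((Tc V z : Ec →L[ℂ] Ec) : Ec →ₗ[ℂ] Ec)
      = Matrix.diagonal (Sum.elim (fun _ => z) (fun _ => (1 : ℂ))) := by
    apply Matrix.ext
    intro i j
    have hTb : Tc V z (b j) = (Sum.elim (fun _ => z) (fun _ => (1 : ℂ)) j) • b j := by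
      rcases j with i' | i'
      · rw [hbinl, hTv]; simp [hbinl]
      · rw [hbinr, hTw]; simp [hbinr]
    rw [LinearMap.toMatrix_apply, ContinuousLinearMap.coe_coe, hTb, map_smul,
      Module.Basis.repr_self]
    rcases eq_or_ne i j with rfl | hij
    · simp [Matrix.diagonal_apply_eq]
    · simp [Matrix.diagonal_apply_ne _ hij, Finsupp.single_apply, Ne.symm hij,
        (by exact fun h => hij h.symm : ¬ j = i)]
  rw [← LinearMap.det_toMatrix b, hmat, Matrix.det_diagonal, Fintype.prod_sum_type]
  simp

lemma order_congr' {f g : ℂ → ℂ} (hf : AnalyticAt ℂ f 0) (hg : AnalyticAt ℂ g 0)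
    (h : f = g) : analyticOrderAt f 0 = analyticOrderAt g 0 := by subst h; rfl

lemma order_pow_mul {h : ℂ → ℂ} (d : ℕ) (hh : AnalyticAt ℂ h 0)
    (hm : AnalyticAt ℂ (fun z => z ^ d * h z) 0) :
    analyticOrderAt (fun z => z ^ d * h z) 0 = (d : ℕ∞) + analyticOrderAt h 0 := by
  by_cases htop : analyticOrderAt h 0 = ⊤
  · rw [htop]
    have h0 : ∀ᶠ z in 𝓝 (0 : ℂ), h z = 0 := analyticOrderAt_eq_top.mp htop
    have : analyticOrderAt (fun z => z ^ d * h z) 0 = ⊤ := by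
      rw [analyticOrderAt_eq_top]
      filter_upwards [h0] with z hz
      simp [hz]
    rw [this]
    simp
  · obtain ⟨m, hm'⟩ := WithTop.ne_top_iff_exists.mp htop
    obtain ⟨g, hg, hg0, hgeq⟩ := (hh.analyticOrderAt_eq_natCast (n := m)).mp hm'.symm
    have key : analyticOrderAt (fun z => z ^ d * h z) 0 = ((d + m : ℕ) : ℕ∞) := by
      rw [hm.analyticOrderAt_eq_natCast]
      refine ⟨g, hg, hg0, ?_⟩
      filter_upwards [hgeq] with z hz
      rw [hz]
      simp only [sub_zero, smul_eq_mul, pow_add]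
      ring
    rw [key, ← hm']
    push_cast
    rfl

end Aux

set_option maxHeartbeats 1000000 in
/-- Stripping one elementary factor: if phi(0) is nonzero but singular and V = ker phi(0),
then psi(z) = phi(z) T_V(z)^{-1} extends holomorphically across 0, psi(0) is injective
on the orthogonal complement of V, and the order of det psi at 0 is that of det phi
minus dim V. -/
theorem strip_elementary_factor {n : ℕ}
    (φ : ℂ → (EuclideanSpace ℂ (Fin n) →L[ℂ] EuclideanSpace ℂ (Fin n)))
    (hφ : AnalyticAt ℂ φ 0) (hφ0 : φ 0 ≠ 0)
    (hdet0 : LinearMap.det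
      ((φ 0 : EuclideanSpace ℂ (Fin n) →L[ℂ] EuclideanSpace ℂ (Fin n)) :
        EuclideanSpace ℂ (Fin n) →ₗ[ℂ] EuclideanSpace ℂ (Fin n)) = 0) :
    ∃ ψ : ℂ → (EuclideanSpace ℂ (Fin n) →L[ℂ] EuclideanSpace ℂ (Fin n)),
      AnalyticAt ℂ ψ 0 ∧
      (∀ᶠ z in 𝓝[≠] (0 : ℂ), ψ z
        = (φ z).comp (z⁻¹ • projc (LinearMap.ker (φ 0 : EuclideanSpace ℂ (Fin n) →ₗ[ℂ] EuclideanSpace ℂ (Fin n)))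
            + (1 - projc (LinearMap.ker (φ 0 : EuclideanSpace ℂ (Fin n) →ₗ[ℂ] EuclideanSpace ℂ (Fin n)))))) ∧
      (∀ x ∈ (LinearMap.ker (φ 0 : EuclideanSpace ℂ (Fin n) →ₗ[ℂ] EuclideanSpace ℂ (Fin n)))ᗮ, ψ 0 x = 0 → x = 0) ∧
      ∃ (hdφ : AnalyticAt ℂ (fun z => LinearMap.det
            ((φ z : EuclideanSpace ℂ (Fin n) →L[ℂ] EuclideanSpace ℂ (Fin n)) :
              EuclideanSpace ℂ (Fin n) →ₗ[ℂ] EuclideanSpace ℂ (Fin n))) 0)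
        (hdψ : AnalyticAt ℂ (fun z => LinearMap.det
            ((ψ z : EuclideanSpace ℂ (Fin n) →L[ℂ] EuclideanSpace ℂ (Fin n)) :
              EuclideanSpace ℂ (Fin n) →ₗ[ℂ] EuclideanSpace ℂ (Fin n))) 0),
        analyticOrderAt (fun z => LinearMap.det
            ((ψ z : EuclideanSpace ℂ (Fin n) →L[ℂ] EuclideanSpace ℂ (Fin n)) :
              EuclideanSpace ℂ (Fin n) →ₗ[ℂ] EuclideanSpace ℂ (Fin n))) 0
          + ((Module.finrank ℂ (LinearMap.ker (φ 0 : EuclideanSpace ℂ (Fin n) →ₗ[ℂ] EuclideanSpace ℂ (Fin n))) : ℕ) : ℕ∞)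
          = analyticOrderAt (fun z => LinearMap.det
            ((φ z : EuclideanSpace ℂ (Fin n) →L[ℂ] EuclideanSpace ℂ (Fin n)) :
              EuclideanSpace ℂ (Fin n) →ₗ[ℂ] EuclideanSpace ℂ (Fin n))) 0 := by
  classical
  let E := EuclideanSpace ℂ (Fin n)
  set V : Submodule ℂ E := LinearMap.ker (φ 0 : E →ₗ[ℂ] E) with hV
  set P : E →L[ℂ] E := projc V with hP
  set g : ℂ → (E →L[ℂ] E) := dslope φ 0 with hgdef
  set ψ : ℂ → (E →L[ℂ] E) := fun z => (g z).comp P + (φ z).comp (1 - P) with hψdef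
  -- φ 0 kills the range of P
  have hker : ∀ x : E, φ 0 (P x) = 0 := fun x =>
    LinearMap.mem_ker.mp (projc_mem V x)
  -- analyticity of g
  have hg : AnalyticAt ℂ g 0 := by
    obtain ⟨p, hp⟩ := hφ
    exact ⟨p.fslope, hp.has_fpower_series_dslope_fslope⟩
  -- analyticity of ψ
  have hψ : AnalyticAt ℂ ψ 0 := by
    have h1 : AnalyticAt ℂ (fun z => (g z).comp P) 0 :=
      (((ContinuousLinearMap.compL ℂ E E E).flip P).analyticAt (g 0)).comp hg
    have h2 : AnalyticAt ℂ (fun z => (φ z).comp (1 - P)) 0 :=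
      (((ContinuousLinearMap.compL ℂ E E E).flip (1 - P)).analyticAt (φ 0)).comp hφ
    exact h1.add h2
  -- the scalar identity z • g z = φ z - φ 0
  have hzg : ∀ z : ℂ, z • g z = φ z - φ 0 := by
    intro z
    have := sub_smul_dslope φ 0 z
    simpa using this
  -- composition identity: ψ z ∘ T z = φ z for all z
  have hcomp : ∀ z : ℂ, (ψ z).comp (Tc V z) = φ z := by
    intro z
    refine ContinuousLinearMap.ext fun x => ?_
    have hPTx : P (Tc V z x) = z • P x := by
      simp only [Tc, ContinuousLinearMap.add_apply, ContinuousLinearMap.smul_apply,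
        ContinuousLinearMap.sub_apply, ContinuousLinearMap.one_apply, map_add, map_smul,
        map_sub, ← hP, projc_idem V x]
      rw [hP, projc_idem V x]
      abel
    have hzgx : z • (g z) (P x) = φ z (P x) := by
      have : (z • g z) (P x) = (φ z - φ 0) (P x) := by rw [hzg z]
      simpa [hker x] using this
    simp only [ContinuousLinearMap.comp_apply, hψdef, ContinuousLinearMap.add_apply,
      ContinuousLinearMap.sub_apply, ContinuousLinearMap.one_apply, hPTx, map_smul]
    rw [hzgx]
    have hTx : Tc V z x = z • P x + (x - P x) := by
      simp [Tc, ContinuousLinearMap.add_apply, ContinuousLinearMap.smul_apply,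
        ContinuousLinearMap.sub_apply, ContinuousLinearMap.one_apply, ← hP]
    rw [hTx]
    have : z • P x + (x - P x) - z • P x = x - P x := by abel
    rw [this, map_sub]
    abel
  refine ⟨ψ, hψ, ?_, ?_, ?_⟩
  · -- eventual equality on punctured neighborhood
    filter_upwards [self_mem_nhdsWithin] with z hz
    have hzne : z ≠ 0 := hz
    refine ContinuousLinearMap.ext fun x => ?_
    have hgz : g z = z⁻¹ • (φ z - φ 0) := by
      rw [hgdef, dslope_of_ne φ hzne, slope_def_module]
      simp
    simp only [hψdef, ContinuousLinearMap.add_apply, ContinuousLinearMap.comp_apply,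
      ContinuousLinearMap.sub_apply, ContinuousLinearMap.one_apply,
      ContinuousLinearMap.smul_apply, hgz, map_sub, map_smul, hker x, sub_zero]
    rw [map_add, map_smul, map_sub]
  · -- injectivity on Vᗮ
    intro x hx hψx
    have hPx : P x = 0 := projc_of_mem_orth V hx
    have : φ 0 x = 0 := by
      have := hψx
      simp only [hψdef, ContinuousLinearMap.add_apply, ContinuousLinearMap.comp_apply,
        ContinuousLinearMap.sub_apply, ContinuousLinearMap.one_apply, hPx, map_zero,
        sub_zero, zero_add] at this
      exact this
    have hxV : x ∈ V := LinearMap.mem_ker.mpr this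
    exact (Submodule.mem_bot ℂ).mp
      (V.orthogonal_disjoint.le_bot ⟨hxV, hx⟩)
  · -- orders
    have hdφ : AnalyticAt ℂ (fun z => LinearMap.det
        ((φ z : E →L[ℂ] E) : E →ₗ[ℂ] E)) 0 := analyticAt_det' hφ
    have hdψ : AnalyticAt ℂ (fun z => LinearMap.det
        ((ψ z : E →L[ℂ] E) : E →ₗ[ℂ] E)) 0 := analyticAt_det' hψ
    refine ⟨hdφ, hdψ, ?_⟩
    set d : ℕ := Module.finrank ℂ V with hd
    have hfun : (fun z => LinearMap.det ((φ z : E →L[ℂ] E) : E →ₗ[ℂ] E))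
        = fun z => z ^ d * LinearMap.det ((ψ z : E →L[ℂ] E) : E →ₗ[ℂ] E) := by
      funext z
      rw [← hcomp z]
      rw [ContinuousLinearMap.toLinearMap_comp, LinearMap.det_comp, det_Tc V z]
      ring
    have hm : AnalyticAt ℂ
        (fun z => z ^ d * LinearMap.det ((ψ z : E →L[ℂ] E) : E →ₗ[ℂ] E)) 0 :=
      hfun ▸ hdφ
    have h1 : analyticOrderAt (fun z => LinearMap.det ((φ z : E →L[ℂ] E) : E →ₗ[ℂ] E)) 0
          = analyticOrderAt (fun z => z ^ d * LinearMap.det ((ψ z : E →L[ℂ] E) : E →ₗ[ℂ] E)) 0 := order_congr' hdφ hm hfun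
    have h2 : analyticOrderAt (fun z => z ^ d * LinearMap.det ((ψ z : E →L[ℂ] E) : E →ₗ[ℂ] E)) 0
          = (d : ℕ∞) + analyticOrderAt (fun z => LinearMap.det ((ψ z : E →L[ℂ] E) : E →ₗ[ℂ] E)) 0 := order_pow_mul d hdψ hm
    rw [h1, h2, add_comm]
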